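/- Translating a 2-scaled polyomino's 2×2 block south by moving its two northern tiles south preserves connectivity at each intermediate step when the block has a southern neighbor block: in a 2-scaled polyomino P containing blocks at cells q and q−(0,1) of the scaled grid, removing the tile at the northwest corner of block q and placing it two units south (below the block) yields a connected configuration. -/

import Mathlib

/-- Grid adjacency on ℤ²: cells differ by 1 in exactly one coordinate. -/
def GridAdj (p q : ℤ × ℤ) : Prop :=
  (|p.1 - q.1| = 1 ∧ p.2 = q.2) ∨ (p.1 = q.1 ∧ |p.2 - q.2| = 1)

/-- A set of cells is connected under grid adjacency. -/
def GridConnected (P : Set (ℤ × ℤ)) : Prop :=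
  ∀ p ∈ P, ∀ q ∈ P,
    Relation.ReflTransGen (fun a b => a ∈ P ∧ b ∈ P ∧ GridAdj a b) p q

/-- The 2-scaled version of a cell set. -/
def Scaled (Q : Set (ℤ × ℤ)) : Set (ℤ × ℤ) :=
  {p | ∃ a b i j : ℤ, (a, b) ∈ Q ∧ (i = 0 ∨ i = 1) ∧ (j = 0 ∨ j = 1) ∧
    p = (2 * a + i, 2 * b + j)}

lemma gridAdj_iff (p q : ℤ × ℤ) : GridAdj p q ↔
    ((p.1 - q.1 = 1 ∨ q.1 - p.1 = 1) ∧ p.2 = q.2) ∨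
    (p.1 = q.1 ∧ (p.2 - q.2 = 1 ∨ q.2 - p.2 = 1)) := by
  unfold GridAdj
  rw [abs_eq (by norm_num : (0:ℤ) ≤ 1), abs_eq (by norm_num : (0:ℤ) ≤ 1)]
  omega

theorem remove_northwest_tile_connected (Q : Set (ℤ × ℤ)) (hQ : GridConnected Q)
    (a b : ℤ) (hab : (a, b) ∈ Q) (hab' : (a, b - 1) ∈ Q) :
    GridConnected (Scaled Q \ {(2 * a, 2 * b + 1)}) := by
  set P : Set (ℤ × ℤ) := Scaled Q \ {(2 * a, 2 * b + 1)} with hPdef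
  set R : ℤ × ℤ → ℤ × ℤ → Prop := fun x y => x ∈ P ∧ y ∈ P ∧ GridAdj x y with hRdef
  -- membership helper
  have memP : ∀ (p : ℤ × ℤ) (c d i j : ℤ), (c, d) ∈ Q → (i = 0 ∨ i = 1) →
      (j = 0 ∨ j = 1) → p = (2 * c + i, 2 * d + j) → p ≠ (2 * a, 2 * b + 1) → p ∈ P := by
    intro p c d i j hcd hi hj hpe hne
    exact ⟨⟨c, d, i, j, hcd, hi, hj, hpe⟩, hne⟩
  have step : ∀ p q : ℤ × ℤ, p ∈ P → q ∈ P → GridAdj p q →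
      Relation.ReflTransGen R p q := by
    intro p q h1 h2 h3
    exact Relation.ReflTransGen.single ⟨h1, h2, h3⟩
  have adj : ∀ p q : ℤ × ℤ,
      ((p.1 - q.1 = 1 ∨ q.1 - p.1 = 1) ∧ p.2 = q.2) ∨
      (p.1 = q.1 ∧ (p.2 - q.2 = 1 ∨ q.2 - p.2 = 1)) → GridAdj p q := by
    intro p q h
    exact (gridAdj_iff p q).mpr h
  -- anchors are in P
  have anchorP : ∀ c d : ℤ, (c, d) ∈ Q → (2 * c, 2 * d) ∈ P := by
    intro c d hcd
    exact memP _ c d 0 0 hcd (Or.inl rfl) (Or.inl rfl)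
      (by simp) (by simp [Prod.ext_iff] <;> omega)
  -- every tile of P connects to its block anchor
  have tile_anchor : ∀ (p : ℤ × ℤ) (c d i j : ℤ), (c, d) ∈ Q → (i = 0 ∨ i = 1) →
      (j = 0 ∨ j = 1) → p = (2 * c + i, 2 * d + j) → p ∈ P →
      Relation.ReflTransGen R p (2 * c, 2 * d) := by
    intro p c d i j hcd hi hj hpe hpP
    have hA := anchorP c d hcd
    have hB : (2 * c + 1, 2 * d) ∈ P :=
      memP _ c d 1 0 hcd (Or.inr rfl) (Or.inl rfl) (by simp) (by simp [Prod.ext_iff] <;> omega)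
    rcases hi with hi | hi <;> rcases hj with hj | hj <;> subst hi hj hpe
    · simpa using Relation.ReflTransGen.refl
    · -- (2c, 2d+1): it's in P so it is not the removed tile
      have hne : (2 * c + 0, 2 * d + 1) ≠ (2 * a, 2 * b + 1) := hpP.2
      exact step _ _ hpP hA (adj _ _ (by simp <;> omega))
    · exact step _ _ hpP hA (adj _ _ (by simp <;> omega))
    · -- (2c+1, 2d+1) → (2c+1, 2d) → (2c, 2d)
      exact Relation.ReflTransGen.trans
        (step _ _ hpP hB (adj _ _ (by simp <;> omega)))
        (step _ _ hB hA (adj _ _ (by simp <;> omega)))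
  -- adjacent blocks have connected anchors
  have block_step : ∀ c d c' d' : ℤ, (c, d) ∈ Q → (c', d') ∈ Q →
      GridAdj (c, d) (c', d') →
      Relation.ReflTransGen R (2 * c, 2 * d) (2 * c', 2 * d') := by
    intro c d c' d' h1 h2 hadj
    have hA := anchorP c d h1
    have hA' := anchorP c' d' h2
    rw [gridAdj_iff] at hadj
    simp only [Prod.fst, Prod.snd] at hadj
    rcases hadj with ⟨hc | hc, hd⟩ | ⟨hc, hd | hd⟩
    · -- c = c' + 1, d = d'
      have hc' : c = c' + 1 := by omega
      subst hc' hd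
      have hB : (2 * c' + 1, 2 * d) ∈ P :=
        memP _ c' d 1 0 h2 (Or.inr rfl) (Or.inl rfl) (by simp) (by simp [Prod.ext_iff] <;> omega)
      exact Relation.ReflTransGen.trans
        (step _ _ hA hB (adj _ _ (by simp <;> omega)))
        (step _ _ hB hA' (adj _ _ (by simp <;> omega)))
    · -- c' = c + 1, d = d'
      have hc' : c' = c + 1 := by omega
      subst hc' hd
      have hB : (2 * c + 1, 2 * d) ∈ P :=
        memP _ c d 1 0 h1 (Or.inr rfl) (Or.inl rfl) (by simp) (by simp [Prod.ext_iff] <;> omega)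
      exact Relation.ReflTransGen.trans
        (step _ _ hA hB (adj _ _ (by simp <;> omega)))
        (step _ _ hB hA' (adj _ _ (by simp <;> omega)))
    · -- d = d' + 1 : going south; use right column of block (c', d')
      have hd' : d = d' + 1 := by omega
      subst hd' hc
      have hB1 : (2 * c + 1, 2 * (d' + 1)) ∈ P :=
        memP _ c (d' + 1) 1 0 h1 (Or.inr rfl) (Or.inl rfl) (by simp) (by simp [Prod.ext_iff] <;> omega)
      have hB2 : (2 * c + 1, 2 * d' + 1) ∈ P :=
        memP _ c d' 1 1 h2 (Or.inr rfl) (Or.inr rfl) (by simp) (by simp [Prod.ext_iff] <;> omega)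
      have hB3 : (2 * c + 1, 2 * d') ∈ P :=
        memP _ c d' 1 0 h2 (Or.inr rfl) (Or.inl rfl) (by simp) (by simp [Prod.ext_iff] <;> omega)
      exact Relation.ReflTransGen.trans (step _ _ hA hB1 (adj _ _ (by simp <;> omega)))
        (Relation.ReflTransGen.trans (step _ _ hB1 hB2 (adj _ _ (by simp <;> omega)))
          (Relation.ReflTransGen.trans (step _ _ hB2 hB3 (adj _ _ (by simp <;> omega)))
            (step _ _ hB3 hA' (adj _ _ (by simp <;> omega)))))
    · -- d' = d + 1 : going north; use right column of block (c, d)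
      have hd' : d' = d + 1 := by omega
      subst hd' hc
      have hB1 : (2 * c + 1, 2 * d) ∈ P :=
        memP _ c d 1 0 h1 (Or.inr rfl) (Or.inl rfl) (by simp) (by simp [Prod.ext_iff] <;> omega)
      have hB2 : (2 * c + 1, 2 * d + 1) ∈ P :=
        memP _ c d 1 1 h1 (Or.inr rfl) (Or.inr rfl) (by simp) (by simp [Prod.ext_iff] <;> omega)
      have hB3 : (2 * c + 1, 2 * (d + 1)) ∈ P :=
        memP _ c (d + 1) 1 0 h2 (Or.inr rfl) (Or.inl rfl) (by simp) (by simp [Prod.ext_iff] <;> omega)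
      exact Relation.ReflTransGen.trans (step _ _ hA hB1 (adj _ _ (by simp <;> omega)))
        (Relation.ReflTransGen.trans (step _ _ hB1 hB2 (adj _ _ (by simp <;> omega)))
          (Relation.ReflTransGen.trans (step _ _ hB2 hB3 (adj _ _ (by simp <;> omega)))
            (step _ _ hB3 hA' (adj _ _ (by simp <;> omega)))))
  -- lift a path in Q to a path of anchors in P
  have lift : ∀ u v : ℤ × ℤ,
      Relation.ReflTransGen (fun x y => x ∈ Q ∧ y ∈ Q ∧ GridAdj x y) u v →
      Relation.ReflTransGen R (2 * u.1, 2 * u.2) (2 * v.1, 2 * v.2) := by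
    intro u v h
    induction h with
    | refl => exact Relation.ReflTransGen.refl
    | tail _ h2 ih =>
      exact Relation.ReflTransGen.trans ih
        (block_step _ _ _ _ h2.1 h2.2.1 h2.2.2)
  have Rsymm : Symmetric R := by
    intro x y hxy
    refine ⟨hxy.2.1, hxy.1, ?_⟩
    rcases hxy.2.2 with ⟨h1, h2⟩ | ⟨h1, h2⟩
    · exact Or.inl ⟨by rw [abs_sub_comm] at h1; exact h1, h2.symm⟩
    · exact Or.inr ⟨h1.symm, by rw [abs_sub_comm] at h2; exact h2⟩
  -- main argument
  intro p hp q hq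
  have hpP := hp
  obtain ⟨⟨c, d, i, j, hcd, hi, hj, hpe⟩, -⟩ := hp
  have hqP := hq
  obtain ⟨⟨c', d', i', j', hcd', hi', hj', hqe⟩, -⟩ := hq
  have h1 := tile_anchor p c d i j hcd hi hj hpe hpP
  have h2 := tile_anchor q c' d' i' j' hcd' hi' hj' hqe hqP
  have h3 := lift (c, d) (c', d') (hQ _ hcd _ hcd')
  simp only at h3
  exact Relation.ReflTransGen.trans h1
    (Relation.ReflTransGen.trans h3 ((@Relation.ReflTransGen.symmetric _ R ⟨fun _ _ h => Rsymm h⟩).symm _ _ h2))
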